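/- The twist J = Σ_{k=0}^{n-1} e_k ⊗ x^k for B = K[Z_n] satisfies Δ_{B⊗B}(J) = (e₁ ⊗ e₂)(J) · (e₂ ⊗ e₁)(J) · (J ⊗ J) in (B⊗B) ⊗ (B⊗B), where e₁, e₂ : B → B⊗B are the embeddings b ↦ b⊗1 and b ↦ 1⊗b; explicitly, Σ_{k,j} e_k ⊗ x^j ⊗ e_{j-k} ⊗ x^j = Σ_{k,l} e_k ⊗ x^{k+l} ⊗ e_l ⊗ x^{k+l}. -/

import Mathlib

set_option linter.unusedSectionVars false

open MonoidAlgebra Finset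
open scoped TensorProduct

noncomputable section

variable (K : Type*) [CommRing K] (G : Type*) [CommGroup G]

namespace GroupBialgebra

instance instCoalgebra : Coalgebra K (MonoidAlgebra K G) :=
  inferInstanceAs (Coalgebra K (MonoidAlgebra K G))

variable {K G}

lemma comul_single (g : G) (c : K) :
    Coalgebra.comul (R := K) (MonoidAlgebra.single g c) =
      MonoidAlgebra.single g (1 : K) ⊗ₜ[K] MonoidAlgebra.single g c := by
  exact (MonoidAlgebra.comul_single (R := K) (A := K) g c).trans
    (by simp [CommSemiring.comul_apply])

lemma counit_single (g : G) (c : K) :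
    Coalgebra.counit (R := K) (MonoidAlgebra.single g c) = c := by
  exact (MonoidAlgebra.counit_single (R := K) (A := K) g c).trans
    (by simp [CommSemiring.counit_apply])

variable (K G)

instance instBialgebra : Bialgebra K (MonoidAlgebra K G) :=
  Bialgebra.mk' K (MonoidAlgebra K G)
    (by simpa [MonoidAlgebra.one_def] using counit_single (1 : G) (1 : K))
    (fun {a b} => by
      induction a using MonoidAlgebra.induction_linear with
      | zero => simp
      | add f h hf hh => simp [add_mul, hf, hh]
      | single g c =>
        induction b using MonoidAlgebra.induction_linear with
        | zero => simp
        | add f h hf hh => simp [mul_add, hf, hh]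
        | single h d =>
          simp only [MonoidAlgebra.single_mul_single, counit_single])
    (by rw [MonoidAlgebra.one_def, comul_single, Algebra.TensorProduct.one_def, MonoidAlgebra.one_def])
    (fun {a b} => by
      induction a using MonoidAlgebra.induction_linear with
      | zero => simp
      | add f h hf hh => simp [add_mul, hf, hh]
      | single g c =>
        induction b using MonoidAlgebra.induction_linear with
        | zero => simp
        | add f h hf hh => simp [mul_add, hf, hh]
        | single h d =>
          simp only [MonoidAlgebra.single_mul_single, comul_single,
            Algebra.TensorProduct.tmul_mul_tmul, one_mul])

end GroupBialgebra

end

noncomputable section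

/-- The group algebra `K[Z_n]` of the cyclic group of order `n`. -/
abbrev GroupAlgZn (K : Type*) [CommRing K] (n : ℕ) : Type _ :=
  MonoidAlgebra K (Multiplicative (ZMod n))

/-- The canonical generator `x` of the group algebra `K[Z_n]`. -/
def xgen (K : Type*) [CommRing K] (n : ℕ) : GroupAlgZn K n :=
  MonoidAlgebra.of K (Multiplicative (ZMod n)) (Multiplicative.ofAdd (1 : ZMod n))

/-- The idempotent `e_k = (1/n) ∑_{i=0}^{n-1} q^{-ik} x^i` in `K[Z_n]`. -/
def eIdem (K : Type*) [Field K] (n : ℕ) (q : K) (k : ZMod n) : GroupAlgZn K n :=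
  (n : K)⁻¹ • ∑ i ∈ Finset.range n, (q ^ (i * k.val))⁻¹ • (xgen K n) ^ i


set_option maxHeartbeats 1000000
set_option synthInstance.maxHeartbeats 400000

noncomputable section CJESec
namespace CJE

open Finset TensorProduct

variable {K : Type*} [Field K] {n : ℕ}

/-- basis element `x^a` indexed by `ZMod n`. -/
def sig (K : Type*) [Field K] (n : ℕ) (a : ZMod n) : GroupAlgZn K n :=
  MonoidAlgebra.single (Multiplicative.ofAdd a) (1 : K)

lemma sig_mul (a b : ZMod n) : sig K n a * sig K n b = sig K n (a + b) := by
  simp [sig, MonoidAlgebra.single_mul_single]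

lemma xgen_pow (i : ℕ) : xgen K n ^ i = sig K n ((i : ZMod n)) := by
  have : xgen K n ^ i = MonoidAlgebra.of K (Multiplicative (ZMod n))
      (Multiplicative.ofAdd (1 : ZMod n) ^ i) := by
    rw [xgen, map_pow]
  rw [this]
  have h2 : (Multiplicative.ofAdd (1 : ZMod n)) ^ i = Multiplicative.ofAdd ((i : ZMod n)) := by
    rw [← ofAdd_nsmul]
    norm_num
  rw [h2, MonoidAlgebra.of_apply, sig]

/-- sums over `range n` as sums over `ZMod n`. -/
lemma sum_range_eq [NeZero n] {M : Type*} [AddCommMonoid M] (f : ZMod n → M) :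
    ∑ i ∈ Finset.range n, f (i : ZMod n) = ∑ a : ZMod n, f a := by
  refine Finset.sum_nbij' (fun i => ((i : ZMod n))) (fun a => a.val) ?_ ?_ ?_ ?_ ?_
  · intro i _; exact Finset.mem_univ _
  · intro a _; exact Finset.mem_range.2 a.val_lt
  · intro i hi; exact (ZMod.val_natCast_of_lt (Finset.mem_range.1 hi))
  · intro a _; exact ZMod.natCast_zmod_val a
  · intro i _; rfl

/-- character -/
def chi (q : K) {n : ℕ} (a : ZMod n) : K := q ^ a.val

section chi
variable {q : K} (hq1 : q ^ n = 1) [NeZero n]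
include hq1

lemma pow_mod (m : ℕ) : q ^ m = q ^ (m % n) := by
  conv_lhs => rw [← Nat.mod_add_div m n]
  rw [pow_add, pow_mul, hq1, one_pow, mul_one]

lemma chi_add (a b : ZMod n) : chi q (a + b) = chi q a * chi q b := by
  rw [chi, chi, chi, ZMod.val_add, ← pow_mod hq1, pow_add]

lemma chi_neg (a : ZMod n) : chi q (-a) = (chi q a)⁻¹ := by
  have h : chi q a * chi q (-a) = 1 := by
    rw [← chi_add hq1, add_neg_cancel]
    simp [chi]
  exact (inv_eq_of_mul_eq_one_right h).symm

lemma chi_natCast (i : ℕ) (k : ZMod n) : chi q ((i : ZMod n) * k) = q ^ (i * k.val) := by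
  rw [chi, ZMod.val_mul, ZMod.val_natCast, ← pow_mod hq1]
  rw [pow_mod hq1 (i % n * k.val), pow_mod hq1 (i * k.val)]
  congr 1
  exact Nat.ModEq.mul_right k.val (Nat.mod_mod_of_dvd i dvd_rfl ▸ (Nat.mod_modEq i n))

end chi

lemma chi_orth {q : K} (hq : IsPrimitiveRoot q n) [NeZero n] (m : ZMod n) :
    ∑ a : ZMod n, chi q (a * m) = if m = 0 then (n : K) else 0 := by
  have hq1 : q ^ n = 1 := hq.pow_eq_one
  rw [← sum_range_eq (fun a => chi q (a * m))]
  by_cases hm : m = 0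
  · subst hm; simp [chi]
  · rw [if_neg hm]
    have : ∀ i ∈ Finset.range n, chi q ((i : ZMod n) * m) = (q ^ m.val) ^ i := by
      intro i _
      rw [chi_natCast hq1, mul_comm i m.val, pow_mul]
    rw [Finset.sum_congr rfl this]
    have hne : q ^ m.val ≠ 1 :=
      hq.pow_ne_one_of_pos_of_lt (ZMod.val_pos.2 hm).ne' m.val_lt
    rw [geom_sum_eq hne, ← pow_mul, mul_comm m.val n, pow_mul, hq1, one_pow,
      sub_self, zero_div]


open Finset TensorProduct
variable {K : Type*} [Field K] {n : ℕ}

lemma mul_expand {A : Type*} [Ring A] [Algebra K A] {ι κ : Type*} (s : Finset ι) (t : Finset κ)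
    (r r' : K) (f : ι → K) (g : κ → K) (u : ι → A) (v : κ → A) :
    (r • ∑ a ∈ s, f a • u a) * (r' • ∑ b ∈ t, g b • v b)
      = ∑ a ∈ s, ∑ b ∈ t, (r * r' * (f a * g b)) • (u a * v b) := by
  rw [smul_mul_smul_comm, Finset.sum_mul_sum, Finset.smul_sum]
  refine Finset.sum_congr rfl fun a _ => ?_
  rw [Finset.smul_sum]
  refine Finset.sum_congr rfl fun b _ => ?_
  rw [smul_mul_smul_comm, smul_smul]

lemma tmul_expand {M N : Type*} [AddCommGroup M] [AddCommGroup N] [Module K M] [Module K N]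
    {ι κ : Type*} (s : Finset ι) (t : Finset κ)
    (r r' : K) (f : ι → K) (g : κ → K) (u : ι → M) (v : κ → N) :
    (r • ∑ a ∈ s, f a • u a) ⊗ₜ[K] (r' • ∑ b ∈ t, g b • v b)
      = ∑ a ∈ s, ∑ b ∈ t, (r * r' * (f a * g b)) • (u a ⊗ₜ[K] v b) := by
  rw [TensorProduct.tmul_smul, ← TensorProduct.smul_tmul', smul_smul, mul_comm r' r,
    TensorProduct.sum_tmul, Finset.smul_sum]
  refine Finset.sum_congr rfl fun a _ => ?_
  rw [← TensorProduct.smul_tmul', TensorProduct.tmul_sum, Finset.smul_sum, Finset.smul_sum]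
  refine Finset.sum_congr rfl fun b _ => ?_
  rw [TensorProduct.tmul_smul, smul_smul, smul_smul]
  congr 1
  ring

/-- normalized idempotent -/
def E (q : K) (n : ℕ) [NeZero n] (k : ZMod n) : GroupAlgZn K n :=
  (n : K)⁻¹ • ∑ a : ZMod n, chi q (-(a * k)) • sig K n a

variable {q : K} [NeZero n]

lemma eIdem_eq (hq1 : q ^ n = 1) (k : ZMod n) : eIdem K n q k = E q n k := by
  rw [eIdem, E]
  congr 1
  rw [← sum_range_eq (fun a => chi q (-(a * k)) • sig K n a)]
  refine Finset.sum_congr rfl fun i _ => ?_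
  rw [xgen_pow, chi_neg hq1, chi_natCast hq1]

lemma E_mul (hq : IsPrimitiveRoot q n) (hn0 : (n : K) ≠ 0) (k l : ZMod n) :
    E q n k * E q n l = if k = l then E q n k else 0 := by
  have hq1 := hq.pow_eq_one
  rw [E, E, mul_expand]
  have step1 : ∀ a : ZMod n,
      (∑ b : ZMod n, ((n : K)⁻¹ * (n : K)⁻¹ * (chi q (-(a * k)) * chi q (-(b * l)))) •
        (sig K n a * sig K n b)) =
      ∑ c : ZMod n, ((n : K)⁻¹ * (n : K)⁻¹ * (chi q (-(c * l)) * chi q (a * (l - k)))) •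
        sig K n c := by
    intro a
    refine Fintype.sum_equiv (Equiv.addLeft a) _ _ fun b => ?_
    simp only [Equiv.coe_addLeft]
    rw [sig_mul]
    have hc : (n : K)⁻¹ * (n : K)⁻¹ * (chi q (-(a * k)) * chi q (-(b * l)))
        = (n : K)⁻¹ * (n : K)⁻¹ * (chi q (-((a + b) * l)) * chi q (a * (l - k))) := by
      rw [← chi_add hq1, ← chi_add hq1]
      congr 1
      exact congrArg (chi q) (by ring)
    rw [hc]
  rw [Finset.sum_congr rfl fun a _ => step1 a, Finset.sum_comm]
  have step2 : ∀ c : ZMod n,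
      (∑ a : ZMod n, ((n : K)⁻¹ * (n : K)⁻¹ * (chi q (-(c * l)) * chi q (a * (l - k)))) •
        sig K n c) =
      ((n : K)⁻¹ * (n : K)⁻¹ * chi q (-(c * l)) * if l - k = 0 then (n : K) else 0) •
        sig K n c := by
    intro c
    rw [← Finset.sum_smul]
    congr 1
    have : ∀ a : ZMod n, (n : K)⁻¹ * (n : K)⁻¹ * (chi q (-(c * l)) * chi q (a * (l - k)))
        = (n : K)⁻¹ * (n : K)⁻¹ * chi q (-(c * l)) * chi q (a * (l - k)) := fun a => by ring
    rw [Finset.sum_congr rfl fun a _ => this a, ← Finset.mul_sum, chi_orth hq]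
  rw [Finset.sum_congr rfl fun c _ => step2 c]
  by_cases hkl : k = l
  · subst hkl
    rw [if_pos rfl, Finset.smul_sum]
    refine Finset.sum_congr rfl fun c _ => ?_
    rw [sub_self, if_pos rfl, smul_smul]
    congr 1
    field_simp
  · rw [if_neg hkl]
    have hd : ¬ (l - k = 0) := fun h => hkl (sub_eq_zero.mp h).symm
    refine Finset.sum_eq_zero fun c _ => ?_
    rw [if_neg hd, mul_zero, zero_smul]

lemma comul_sig (a : ZMod n) :
    Coalgebra.comul (R := K) (sig K n a) = sig K n a ⊗ₜ[K] sig K n a := by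
  rw [sig, GroupBialgebra.comul_single]

lemma comul_E (hq : IsPrimitiveRoot q n) (hn0 : (n : K) ≠ 0) (k : ZMod n) :
    ∑ m : ZMod n, E q n m ⊗ₜ[K] E q n (k - m)
      = Coalgebra.comul (R := K) (E q n k) := by
  have hq1 := hq.pow_eq_one
  have lhs : Coalgebra.comul (R := K) (E q n k)
      = (n : K)⁻¹ • ∑ a : ZMod n, chi q (-(a * k)) • (sig K n a ⊗ₜ[K] sig K n a) := by
    rw [E, map_smul, map_sum]
    congr 1
    exact Finset.sum_congr rfl fun a _ => by rw [map_smul, comul_sig]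
  rw [lhs]
  have expand : ∀ m : ZMod n, E q n m ⊗ₜ[K] E q n (k - m)
      = ∑ a : ZMod n, ∑ b : ZMod n,
          ((n : K)⁻¹ * (n : K)⁻¹ * (chi q (-(a * m)) * chi q (-(b * (k - m))))) •
            (sig K n a ⊗ₜ[K] sig K n b) := fun m => by
    rw [E, E, tmul_expand]
  rw [Finset.sum_congr rfl fun m _ => expand m, Finset.sum_comm]
  rw [Finset.sum_congr rfl fun a (_ : a ∈ Finset.univ) => Finset.sum_comm]
  have inner : ∀ a b : ZMod n,
      (∑ m : ZMod n, ((n : K)⁻¹ * (n : K)⁻¹ * (chi q (-(a * m)) * chi q (-(b * (k - m))))) •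
        (sig K n a ⊗ₜ[K] sig K n b))
      = ((n : K)⁻¹ * (n : K)⁻¹ * (chi q (-(b * k)) * if b - a = 0 then (n : K) else 0)) •
          (sig K n a ⊗ₜ[K] sig K n b) := by
    intro a b
    rw [← Finset.sum_smul]
    congr 1
    have hc : ∀ m : ZMod n, (n : K)⁻¹ * (n : K)⁻¹ * (chi q (-(a * m)) * chi q (-(b * (k - m))))
        = (n : K)⁻¹ * (n : K)⁻¹ * (chi q (-(b * k)) * chi q (m * (b - a))) := by
      intro m
      rw [← chi_add hq1, ← chi_add hq1]
      congr 1
      exact congrArg (chi q) (by ring)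
    rw [Finset.sum_congr rfl fun m _ => hc m, ← Finset.mul_sum, ← Finset.mul_sum, chi_orth hq]
  rw [Finset.sum_congr rfl fun a _ => Finset.sum_congr rfl fun b _ => inner a b]
  rw [Finset.smul_sum]
  refine Finset.sum_congr rfl fun a _ => ?_
  rw [Finset.sum_eq_single a]
  · rw [sub_self, if_pos rfl, smul_smul]
    congr 1
    field_simp
  · intro b _ hb
    rw [if_neg (fun h => hb (sub_eq_zero.mp h)), mul_zero, mul_zero, zero_smul]
  · intro h; exact absurd (Finset.mem_univ a) h


lemma key {q : K} :
    (∑ k : ZMod n, ∑ j : ZMod n, (E q n k ⊗ₜ[K] sig K n j) ⊗ₜ[K]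
        (E q n (j - k) ⊗ₜ[K] sig K n j))
    = ∑ k : ZMod n, ∑ l : ZMod n, (E q n k ⊗ₜ[K] sig K n (k + l)) ⊗ₜ[K]
        (E q n l ⊗ₜ[K] sig K n (k + l)) := by
  refine Finset.sum_congr rfl fun k _ => ?_
  refine (Fintype.sum_equiv (Equiv.addLeft k) _ _ fun l => ?_).symm
  simp only [Equiv.coe_addLeft, add_sub_cancel_left]

lemma hJ' (hq : IsPrimitiveRoot q n) (hn0 : (n : K) ≠ 0) :
    (∑ k ∈ Finset.range n, eIdem K n q ((k : ℕ) : ZMod n) ⊗ₜ[K] (xgen K n ^ k))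
    = ∑ k : ZMod n, E q n k ⊗ₜ[K] sig K n k := by
  rw [← sum_range_eq (fun a : ZMod n => E q n a ⊗ₜ[K] sig K n a)]
  refine Finset.sum_congr rfl fun k _ => ?_
  rw [eIdem_eq hq.pow_eq_one, xgen_pow]

lemma sig_E (hq1 : q ^ n = 1) (a l : ZMod n) :
    sig K n a * E q n l = chi q (a * l) • E q n l := by
  rw [E, mul_smul_comm, Finset.mul_sum]
  have h1 : ∀ c : ZMod n, sig K n a * (chi q (-(c * l)) • sig K n c)
      = chi q (-(c * l)) • sig K n (a + c) := by
    intro c; rw [mul_smul_comm, sig_mul]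
  rw [Finset.sum_congr rfl fun c _ => h1 c]
  have h2 : (∑ c : ZMod n, chi q (-(c * l)) • sig K n (a + c))
      = ∑ d : ZMod n, (chi q (a * l) * chi q (-(d * l))) • sig K n d := by
    refine Fintype.sum_equiv (Equiv.addLeft a) _ _ fun c => ?_
    simp only [Equiv.coe_addLeft]
    have hcf : chi q (-(c * l)) = chi q (a * l) * chi q (-((a + c) * l)) := by
      rw [← chi_add hq1]; exact congrArg (chi q) (by ring)
    rw [hcf]
  rw [h2]
  conv_rhs => rw [smul_smul, mul_comm, ← smul_smul, Finset.smul_sum]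
  congr 1
  refine Finset.sum_congr rfl fun d _ => ?_
  rw [smul_smul]

lemma fourier_inv (hq : IsPrimitiveRoot q n) (hn0 : (n : K) ≠ 0) (m : ZMod n) :
    ∑ l : ZMod n, chi q (l * m) • E q n l = sig K n m := by
  have hq1 := hq.pow_eq_one
  have h1 : ∀ l : ZMod n, chi q (l * m) • E q n l
      = ∑ c : ZMod n, (chi q (l * m) * (n : K)⁻¹ * chi q (-(c * l))) • sig K n c := by
    intro l
    rw [E, smul_smul, Finset.smul_sum]
    refine Finset.sum_congr rfl fun c _ => ?_
    rw [smul_smul]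
  rw [Finset.sum_congr rfl fun l _ => h1 l, Finset.sum_comm]
  have h2 : ∀ c : ZMod n,
      (∑ l : ZMod n, (chi q (l * m) * (n : K)⁻¹ * chi q (-(c * l))) • sig K n c)
      = (if m - c = 0 then (1 : K) else 0) • sig K n c := by
    intro c
    rw [← Finset.sum_smul]
    congr 1
    have h3 : ∀ l : ZMod n, chi q (l * m) * (n : K)⁻¹ * chi q (-(c * l))
        = (n : K)⁻¹ * chi q (l * (m - c)) := by
      intro l
      rw [mul_comm (chi q (l * m)) ((n : K)⁻¹), mul_assoc, ← chi_add hq1]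
      exact congrArg (fun t => (n : K)⁻¹ * chi q t) (by ring)
    rw [Finset.sum_congr rfl fun l _ => h3 l, ← Finset.mul_sum, chi_orth hq]
    split_ifs with h
    · field_simp
    · rw [mul_zero]
  rw [Finset.sum_congr rfl fun c _ => h2 c, Finset.sum_eq_single m]
  · rw [sub_self, if_pos rfl, one_smul]
  · intro c _ hc
    rw [if_neg (fun h => hc (sub_eq_zero.mp h).symm), zero_smul]
  · intro h; exact absurd (Finset.mem_univ m) h

lemma part1 (hq : IsPrimitiveRoot q n) (hn0 : (n : K) ≠ 0) :
    Coalgebra.comul (R := K) (A := GroupAlgZn K n ⊗[K] GroupAlgZn K n)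
      (∑ k ∈ Finset.range n, eIdem K n q ((k : ℕ) : ZMod n) ⊗ₜ[K] (xgen K n ^ k)) =
      (TensorProduct.map
        (Algebra.TensorProduct.includeLeft :
            GroupAlgZn K n →ₐ[K] GroupAlgZn K n ⊗[K] GroupAlgZn K n).toLinearMap
        (Algebra.TensorProduct.includeRight :
            GroupAlgZn K n →ₐ[K] GroupAlgZn K n ⊗[K] GroupAlgZn K n).toLinearMap)
        (∑ k ∈ Finset.range n, eIdem K n q ((k : ℕ) : ZMod n) ⊗ₜ[K] (xgen K n ^ k)) *
      (TensorProduct.map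
        (Algebra.TensorProduct.includeRight :
            GroupAlgZn K n →ₐ[K] GroupAlgZn K n ⊗[K] GroupAlgZn K n).toLinearMap
        (Algebra.TensorProduct.includeLeft :
            GroupAlgZn K n →ₐ[K] GroupAlgZn K n ⊗[K] GroupAlgZn K n).toLinearMap)
        (∑ k ∈ Finset.range n, eIdem K n q ((k : ℕ) : ZMod n) ⊗ₜ[K] (xgen K n ^ k)) *
      ((∑ k ∈ Finset.range n, eIdem K n q ((k : ℕ) : ZMod n) ⊗ₜ[K] (xgen K n ^ k)) ⊗ₜ[K]
        (∑ k ∈ Finset.range n, eIdem K n q ((k : ℕ) : ZMod n) ⊗ₜ[K] (xgen K n ^ k))) := by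
  have hq1 : q ^ n = 1 := hq.pow_eq_one
  have hJ := hJ' hq hn0
  rw [hJ]
  have hL : Coalgebra.comul (R := K) (A := GroupAlgZn K n ⊗[K] GroupAlgZn K n)
      (∑ k : ZMod n, E q n k ⊗ₜ[K] sig K n k)
      = ∑ j : ZMod n, ∑ k : ZMod n, (E q n k ⊗ₜ[K] sig K n j) ⊗ₜ[K]
          (E q n (j - k) ⊗ₜ[K] sig K n j) := by
    rw [map_sum]
    refine Finset.sum_congr rfl fun j _ => ?_
    have hc : Coalgebra.comul (R := K) (A := GroupAlgZn K n ⊗[K] GroupAlgZn K n)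
        (E q n j ⊗ₜ[K] sig K n j)
        = TensorProduct.tensorTensorTensorComm K _ _ _ _
            ((Coalgebra.comul (R := K) (E q n j)) ⊗ₜ[K]
              (Coalgebra.comul (R := K) (sig K n j))) := rfl
    rw [hc, ← comul_E hq hn0, comul_sig, TensorProduct.sum_tmul, map_sum]
    refine Finset.sum_congr rfl fun k _ => ?_
    rw [TensorProduct.tensorTensorTensorComm_tmul]
  rw [hL]
  have hP1 : (TensorProduct.map
        (Algebra.TensorProduct.includeLeft :
            GroupAlgZn K n →ₐ[K] GroupAlgZn K n ⊗[K] GroupAlgZn K n).toLinearMap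
        (Algebra.TensorProduct.includeRight :
            GroupAlgZn K n →ₐ[K] GroupAlgZn K n ⊗[K] GroupAlgZn K n).toLinearMap)
        (∑ k : ZMod n, E q n k ⊗ₜ[K] sig K n k)
      = ∑ k : ZMod n, (E q n k ⊗ₜ[K] (1 : GroupAlgZn K n)) ⊗ₜ[K]
          ((1 : GroupAlgZn K n) ⊗ₜ[K] sig K n k) := by
    rw [map_sum]
    simp only [TensorProduct.map_tmul, AlgHom.toLinearMap_apply,
      Algebra.TensorProduct.includeLeft_apply, Algebra.TensorProduct.includeRight_apply]
  have hP2 : (TensorProduct.map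
        (Algebra.TensorProduct.includeRight :
            GroupAlgZn K n →ₐ[K] GroupAlgZn K n ⊗[K] GroupAlgZn K n).toLinearMap
        (Algebra.TensorProduct.includeLeft :
            GroupAlgZn K n →ₐ[K] GroupAlgZn K n ⊗[K] GroupAlgZn K n).toLinearMap)
        (∑ k : ZMod n, E q n k ⊗ₜ[K] sig K n k)
      = ∑ l : ZMod n, ((1 : GroupAlgZn K n) ⊗ₜ[K] E q n l) ⊗ₜ[K]
          (sig K n l ⊗ₜ[K] (1 : GroupAlgZn K n)) := by
    rw [map_sum]
    simp only [TensorProduct.map_tmul, AlgHom.toLinearMap_apply,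
      Algebra.TensorProduct.includeLeft_apply, Algebra.TensorProduct.includeRight_apply]
  rw [hP1, hP2, TensorProduct.sum_tmul]
  simp only [TensorProduct.tmul_sum]
  simp only [Finset.sum_mul, Finset.mul_sum]
  have hterm : ∀ k l a b : ZMod n,
      (((E q n k ⊗ₜ[K] (1 : GroupAlgZn K n)) ⊗ₜ[K] ((1 : GroupAlgZn K n) ⊗ₜ[K] sig K n k)) *
        (((1 : GroupAlgZn K n) ⊗ₜ[K] E q n l) ⊗ₜ[K] (sig K n l ⊗ₜ[K] (1 : GroupAlgZn K n))) *
        ((E q n a ⊗ₜ[K] sig K n a) ⊗ₜ[K] (E q n b ⊗ₜ[K] sig K n b)))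
      = (chi q (a * l) * chi q (l * b)) •
          (((E q n k * E q n a) ⊗ₜ[K] E q n l) ⊗ₜ[K] (E q n b ⊗ₜ[K] sig K n (k + b))) := by
    intro k l a b
    simp only [Algebra.TensorProduct.tmul_mul_tmul, one_mul, mul_one]
    rw [mul_comm (E q n l) (sig K n a), sig_E hq1, sig_E hq1, sig_mul]
    rw [TensorProduct.tmul_smul, ← TensorProduct.smul_tmul', ← TensorProduct.smul_tmul',
      TensorProduct.tmul_smul, smul_smul]
  rw [Finset.sum_congr rfl fun a (_ : a ∈ Finset.univ) =>
    Finset.sum_congr rfl fun b (_ : b ∈ Finset.univ) =>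
    Finset.sum_congr rfl fun l (_ : l ∈ Finset.univ) =>
    Finset.sum_congr rfl fun k (_ : k ∈ Finset.univ) => hterm k l a b]
  have stepA : ∀ a b l : ZMod n,
      (∑ k : ZMod n, (chi q (a * l) * chi q (l * b)) •
        (((E q n k * E q n a) ⊗ₜ[K] E q n l) ⊗ₜ[K] (E q n b ⊗ₜ[K] sig K n (k + b))))
      = (chi q (a * l) * chi q (l * b)) •
          ((E q n a ⊗ₜ[K] E q n l) ⊗ₜ[K] (E q n b ⊗ₜ[K] sig K n (a + b))) := by
    intro a b l
    rw [Finset.sum_eq_single a]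
    · rw [E_mul hq hn0, if_pos rfl]
    · intro k _ hk
      rw [E_mul hq hn0, if_neg hk, TensorProduct.zero_tmul,
        TensorProduct.zero_tmul, smul_zero]
    · intro h; exact absurd (Finset.mem_univ a) h
  rw [Finset.sum_congr rfl fun a (_ : a ∈ Finset.univ) =>
    Finset.sum_congr rfl fun b (_ : b ∈ Finset.univ) =>
    Finset.sum_congr rfl fun l (_ : l ∈ Finset.univ) => stepA a b l]
  have stepB : ∀ a b : ZMod n,
      (∑ l : ZMod n, (chi q (a * l) * chi q (l * b)) •
        ((E q n a ⊗ₜ[K] E q n l) ⊗ₜ[K] (E q n b ⊗ₜ[K] sig K n (a + b))))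
      = (E q n a ⊗ₜ[K] sig K n (a + b)) ⊗ₜ[K] (E q n b ⊗ₜ[K] sig K n (a + b)) := by
    intro a b
    have h1 : ∀ l : ZMod n, (chi q (a * l) * chi q (l * b)) •
        ((E q n a ⊗ₜ[K] E q n l) ⊗ₜ[K] (E q n b ⊗ₜ[K] sig K n (a + b)))
        = (E q n a ⊗ₜ[K] (chi q (l * (a + b)) • E q n l)) ⊗ₜ[K]
            (E q n b ⊗ₜ[K] sig K n (a + b)) := by
      intro l
      rw [TensorProduct.tmul_smul, ← TensorProduct.smul_tmul']
      congr 1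
      rw [← chi_add hq1]
      exact congrArg (chi q) (by ring)
    rw [Finset.sum_congr rfl fun l _ => h1 l, ← TensorProduct.sum_tmul,
      ← TensorProduct.tmul_sum, fourier_inv hq hn0]
  rw [Finset.sum_congr rfl fun a (_ : a ∈ Finset.univ) =>
    Finset.sum_congr rfl fun b (_ : b ∈ Finset.univ) => stepB a b, Finset.sum_comm]
  exact key

lemma part2 (hq : IsPrimitiveRoot q n) (hn0 : (n : K) ≠ 0) :
    (∑ k ∈ Finset.range n, ∑ j ∈ Finset.range n,
        ((eIdem K n q ((k : ℕ) : ZMod n)) ⊗ₜ[K] (xgen K n ^ j)) ⊗ₜ[K]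
          ((eIdem K n q (((j : ℕ) : ZMod n) - ((k : ℕ) : ZMod n))) ⊗ₜ[K] (xgen K n ^ j)) =
      ∑ k ∈ Finset.range n, ∑ l ∈ Finset.range n,
        ((eIdem K n q ((k : ℕ) : ZMod n)) ⊗ₜ[K] (xgen K n ^ (k + l))) ⊗ₜ[K]
          ((eIdem K n q ((l : ℕ) : ZMod n)) ⊗ₜ[K] (xgen K n ^ (k + l)))) := by
  have hq1 : q ^ n = 1 := hq.pow_eq_one
  have h1 : (∑ k ∈ Finset.range n, ∑ j ∈ Finset.range n,
      (eIdem K n q ((k : ℕ) : ZMod n) ⊗ₜ[K] (xgen K n ^ j)) ⊗ₜ[K]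
        (eIdem K n q (((j : ℕ) : ZMod n) - ((k : ℕ) : ZMod n)) ⊗ₜ[K] (xgen K n ^ j)))
      = ∑ k : ZMod n, ∑ j : ZMod n, (E q n k ⊗ₜ[K] sig K n j) ⊗ₜ[K]
          (E q n (j - k) ⊗ₜ[K] sig K n j) := by
    rw [← sum_range_eq (fun k : ZMod n => ∑ j : ZMod n,
      (E q n k ⊗ₜ[K] sig K n j) ⊗ₜ[K] (E q n (j - k) ⊗ₜ[K] sig K n j))]
    refine Finset.sum_congr rfl fun k _ => ?_
    rw [← sum_range_eq (fun j : ZMod n =>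
      (E q n (k : ZMod n) ⊗ₜ[K] sig K n j) ⊗ₜ[K]
        (E q n (j - (k : ZMod n)) ⊗ₜ[K] sig K n j))]
    refine Finset.sum_congr rfl fun j _ => ?_
    rw [eIdem_eq hq1, eIdem_eq hq1, xgen_pow]
  have h2 : (∑ k ∈ Finset.range n, ∑ l ∈ Finset.range n,
      (eIdem K n q ((k : ℕ) : ZMod n) ⊗ₜ[K] (xgen K n ^ (k + l))) ⊗ₜ[K]
        (eIdem K n q ((l : ℕ) : ZMod n) ⊗ₜ[K] (xgen K n ^ (k + l))))
      = ∑ k : ZMod n, ∑ l : ZMod n, (E q n k ⊗ₜ[K] sig K n (k + l)) ⊗ₜ[K]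
          (E q n l ⊗ₜ[K] sig K n (k + l)) := by
    rw [← sum_range_eq (fun k : ZMod n => ∑ l : ZMod n,
      (E q n k ⊗ₜ[K] sig K n (k + l)) ⊗ₜ[K] (E q n l ⊗ₜ[K] sig K n (k + l)))]
    refine Finset.sum_congr rfl fun k _ => ?_
    rw [← sum_range_eq (fun l : ZMod n =>
      (E q n (k : ZMod n) ⊗ₜ[K] sig K n ((k : ZMod n) + l)) ⊗ₜ[K]
        (E q n l ⊗ₜ[K] sig K n ((k : ZMod n) + l)))]
    refine Finset.sum_congr rfl fun l _ => ?_
    rw [eIdem_eq hq1, eIdem_eq hq1, xgen_pow, Nat.cast_add]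
  rw [h1, h2, key]

end CJE
end CJESec

/-- the twist `J = ∑_k e_k ⊗ x^k` satisfies
`Δ_{B⊗B}(J) = (e₁ ⊗ e₂)(J) · (e₂ ⊗ e₁)(J) · (J ⊗ J)`; explicitly,
`∑_{k,j} e_k ⊗ x^j ⊗ e_{j−k} ⊗ x^j = ∑_{k,l} e_k ⊗ x^{k+l} ⊗ e_l ⊗ x^{k+l}`. -/
theorem comul_J_eq (K : Type*) [Field K] [CharZero K] (n : ℕ) (hn : 2 ≤ n)
    (q : K) (hq : IsPrimitiveRoot q n) :
    let B := GroupAlgZn K n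
    let x := xgen K n
    let e : ℕ → B := fun k => eIdem K n q ((k : ℕ) : ZMod n)
    let J : B ⊗[K] B := ∑ k ∈ Finset.range n, (e k) ⊗ₜ[K] (x ^ k)
    (Coalgebra.comul (R := K) (A := B ⊗[K] B) J =
      (TensorProduct.map (Algebra.TensorProduct.includeLeft : B →ₐ[K] B ⊗[K] B).toLinearMap
        (Algebra.TensorProduct.includeRight : B →ₐ[K] B ⊗[K] B).toLinearMap) J *
      (TensorProduct.map (Algebra.TensorProduct.includeRight : B →ₐ[K] B ⊗[K] B).toLinearMap
        (Algebra.TensorProduct.includeLeft : B →ₐ[K] B ⊗[K] B).toLinearMap) J *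
      (J ⊗ₜ[K] J)) ∧
    (∑ k ∈ Finset.range n, ∑ j ∈ Finset.range n,
        ((e k) ⊗ₜ[K] (x ^ j)) ⊗ₜ[K]
          ((eIdem K n q (((j : ℕ) : ZMod n) - ((k : ℕ) : ZMod n))) ⊗ₜ[K] (x ^ j)) =
      ∑ k ∈ Finset.range n, ∑ l ∈ Finset.range n,
        ((e k) ⊗ₜ[K] (x ^ (k + l))) ⊗ₜ[K] ((e l) ⊗ₜ[K] (x ^ (k + l)))) := by
  haveI : NeZero n := ⟨by omega⟩
  have hn0 : (n : K) ≠ 0 := Nat.cast_ne_zero.2 (by omega)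
  exact ⟨CJE.part1 hq hn0, CJE.part2 hq hn0⟩
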